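/- arXiv:2101.04100 — 2 statements merged into one kernel-verified Lean document; each statement's English description precedes it below -/
import Mathlib

section
/- Let L(z) = M_T(z/2)·M_V(z)·M_T(z/2) be the leapfrog matrix for the harmonic oscillator, let α₁ = 1/4 + (i/4)·√(5/3), α₂ = 1/2, and let R(h) be the entrywise real part of L(conj(α₁) h)·L(α₂ h)·L(α₁ h). Then (fun h : ℝ => R(−h)·R(h) − 1) is O(h¹²) as h → 0; that is, the real projection of this fourth-order symmetric-conjugate composition is pseudo-symmetric of order 11 for the harmonic oscillator. -/
open Matrix Asymptotics Filter

attribute [local instance] Matrix.normedAddCommGroup Matrix.normedSpace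

/-- Exact evolution matrix of the harmonic oscillator `q' = p`, `p' = -q`. -/
noncomputable def MH (z : ℂ) : Matrix (Fin 2) (Fin 2) ℂ :=
  !![Complex.cos z, Complex.sin z; -Complex.sin z, Complex.cos z]

/-- Exact evolution matrix of the kinetic part. -/
def MT (z : ℂ) : Matrix (Fin 2) (Fin 2) ℂ := !![1, z; 0, 1]

/-- Exact evolution matrix of the potential part. -/
def MV (z : ℂ) : Matrix (Fin 2) (Fin 2) ℂ := !![1, 0; -z, 1]

/-- The leapfrog/Strang splitting matrix. -/
noncomputable def L (z : ℂ) : Matrix (Fin 2) (Fin 2) ℂ := MT (z / 2) * MV z * MT (z / 2)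

/-- The coefficient `α₁ = 1/4 + (i/4) √(5/3)`. -/
noncomputable def α₁ : ℂ := 1 / 4 + Complex.I / 4 * (Real.sqrt (5 / 3) : ℝ)

/-- The coefficient `α₂ = 1/2`. -/
noncomputable def α₂ : ℂ := 1 / 2

/-- The three-stage symmetric-conjugate composition `S_{ᾱ₁h} ∘ S_{α₂h} ∘ S_{α₁h}`. -/
noncomputable def Ψ₃ (h : ℝ) : Matrix (Fin 2) (Fin 2) ℂ :=
  L (starRingEnd ℂ α₁ * (h : ℂ)) * L (α₂ * (h : ℂ)) * L (α₁ * (h : ℂ))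

/-- The real projection of `Ψ₃`. -/
noncomputable def Rproj (h : ℝ) : Matrix (Fin 2) (Fin 2) ℝ := (Ψ₃ h).map Complex.re

noncomputable def s53 : ℝ := Real.sqrt (5 / 3)

lemma L_eq (z : ℂ) : L z = !![1 - z^2/2, z - z^3/4; -z, 1 - z^2/2] := by
  ext i j
  fin_cases i <;> fin_cases j <;>
    simp [L, MT, MV, Matrix.mul_apply, Fin.sum_univ_two] <;> ring

lemma Psi_eq (h : ℝ) : Ψ₃ h =
    !![((((1) - (1/2)*h^2 + (9/256)*h^4 + (1/256)*h^4*s53^2 - (9/16384)*h^6 - (5/8192)*h^6*s53^2 - (1/16384)*h^6*s53^4 : ℝ)) : ℂ) + ((((9/16384)*h^6*s53 + (5/8192)*h^6*s53^3 + (1/16384)*h^6*s53^5 : ℝ)) : ℂ) * Complex.I,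
       ((((1)*h - (23/128)*h^3 + (1/128)*h^3*s53^2 + (27/4096)*h^5 - (3/2048)*h^5*s53^2 - (1/4096)*h^5*s53^4 - (9/131072)*h^7 - (19/131072)*h^7*s53^2 - (11/131072)*h^7*s53^4 - (1/131072)*h^7*s53^6 : ℝ)) : ℂ) + (((0 : ℝ)) : ℂ) * Complex.I;
       ((((-1)*h + (9/64)*h^3 + (1/64)*h^3*s53^2 - (9/2048)*h^5 - (5/1024)*h^5*s53^2 - (1/2048)*h^5*s53^4 : ℝ)) : ℂ) + (((0 : ℝ)) : ℂ) * Complex.I,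
       ((((1) - (1/2)*h^2 + (9/256)*h^4 + (1/256)*h^4*s53^2 - (9/16384)*h^6 - (5/8192)*h^6*s53^2 - (1/16384)*h^6*s53^4 : ℝ)) : ℂ) + ((((-9/16384)*h^6*s53 - (5/8192)*h^6*s53^3 - (1/16384)*h^6*s53^5 : ℝ)) : ℂ) * Complex.I] := by
  have hconj : (starRingEnd ℂ) α₁ = 1/4 - Complex.I/4 * ((s53 : ℝ) : ℂ) := by
    simp only [α₁, _root_.map_add, map_div₀, _root_.map_mul, _root_.map_one, Complex.conj_I,
      Complex.conj_ofReal, map_ofNat, s53]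
    ring
  have hα : α₁ = 1/4 + Complex.I/4 * ((s53 : ℝ) : ℂ) := rfl
  have hα₂ : α₂ = 1/2 := rfl
  simp only [Ψ₃, L_eq, hα₂]
  rw [hconj, hα]
  ext i j
  fin_cases i <;> fin_cases j <;>
    simp only [Matrix.mul_apply, Fin.sum_univ_two, Matrix.cons_val', Matrix.cons_val_zero,
      Matrix.cons_val_one, Matrix.head_cons, Matrix.head_fin_const, Matrix.empty_val',
      Matrix.cons_val_fin_one, Matrix.of_apply, Fin.isValue, Fin.zero_eta, Fin.mk_one]
  · push_cast
    linear_combination ((-1/256)*(h:ℂ)^4*(s53:ℂ)^2 + (5/8192)*(h:ℂ)^6*(s53:ℂ)^2 - (5/8192)*(h:ℂ)^6*(s53:ℂ)^3*Complex.I + (1/16384)*(h:ℂ)^6*(s53:ℂ)^4 - (1/16384)*(h:ℂ)^6*(s53:ℂ)^4*Complex.I^2 - (1/16384)*(h:ℂ)^6*(s53:ℂ)^5*Complex.I + (1/16384)*(h:ℂ)^6*(s53:ℂ)^5*Complex.I^3) * Complex.I_sq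
  · push_cast
    linear_combination ((-1/128)*(h:ℂ)^3*(s53:ℂ)^2 + (3/2048)*(h:ℂ)^5*(s53:ℂ)^2 + (1/4096)*(h:ℂ)^5*(s53:ℂ)^4 - (1/4096)*(h:ℂ)^5*(s53:ℂ)^4*Complex.I^2 + (19/131072)*(h:ℂ)^7*(s53:ℂ)^2 + (11/131072)*(h:ℂ)^7*(s53:ℂ)^4 - (11/131072)*(h:ℂ)^7*(s53:ℂ)^4*Complex.I^2 + (1/131072)*(h:ℂ)^7*(s53:ℂ)^6 - (1/131072)*(h:ℂ)^7*(s53:ℂ)^6*Complex.I^2 + (1/131072)*(h:ℂ)^7*(s53:ℂ)^6*Complex.I^4) * Complex.I_sq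
  · push_cast
    linear_combination ((-1/64)*(h:ℂ)^3*(s53:ℂ)^2 + (5/1024)*(h:ℂ)^5*(s53:ℂ)^2 + (1/2048)*(h:ℂ)^5*(s53:ℂ)^4 - (1/2048)*(h:ℂ)^5*(s53:ℂ)^4*Complex.I^2) * Complex.I_sq
  · push_cast
    linear_combination ((-1/256)*(h:ℂ)^4*(s53:ℂ)^2 + (5/8192)*(h:ℂ)^6*(s53:ℂ)^2 + (5/8192)*(h:ℂ)^6*(s53:ℂ)^3*Complex.I + (1/16384)*(h:ℂ)^6*(s53:ℂ)^4 - (1/16384)*(h:ℂ)^6*(s53:ℂ)^4*Complex.I^2 + (1/16384)*(h:ℂ)^6*(s53:ℂ)^5*Complex.I - (1/16384)*(h:ℂ)^6*(s53:ℂ)^5*Complex.I^3) * Complex.I_sq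

lemma Rproj_eq (h : ℝ) : Rproj h =
    !![(1) - (1/2)*h^2 + (9/256)*h^4 + (1/256)*h^4*s53^2 - (9/16384)*h^6 - (5/8192)*h^6*s53^2 - (1/16384)*h^6*s53^4,
       (1)*h - (23/128)*h^3 + (1/128)*h^3*s53^2 + (27/4096)*h^5 - (3/2048)*h^5*s53^2 - (1/4096)*h^5*s53^4 - (9/131072)*h^7 - (19/131072)*h^7*s53^2 - (11/131072)*h^7*s53^4 - (1/131072)*h^7*s53^6;
       (-1)*h + (9/64)*h^3 + (1/64)*h^3*s53^2 - (9/2048)*h^5 - (5/1024)*h^5*s53^2 - (1/2048)*h^5*s53^4,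
       (1) - (1/2)*h^2 + (9/256)*h^4 + (1/256)*h^4*s53^2 - (9/16384)*h^6 - (5/8192)*h^6*s53^2 - (1/16384)*h^6*s53^4] := by
  rw [Rproj, Psi_eq]
  ext i j
  fin_cases i <;> fin_cases j <;>
    simp [Matrix.map_apply, ← Complex.ofReal_pow]

lemma key (h : ℝ) : Rproj (-h) * Rproj h - 1 =
    (h^12) • !![(-5/995328 : ℝ), 0; 0, (-5/995328 : ℝ)] := by
  have hs : s53 ^ 2 = 5 / 3 := Real.sq_sqrt (by norm_num)
  rw [Rproj_eq, Rproj_eq]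
  ext i j
  fin_cases i <;> fin_cases j <;>
    simp only [Matrix.mul_apply, Fin.sum_univ_two, Matrix.sub_apply, Matrix.smul_apply,
      Matrix.one_apply, Matrix.cons_val', Matrix.cons_val_zero, Matrix.cons_val_one,
      Matrix.head_cons, Matrix.head_fin_const, Matrix.empty_val', Matrix.cons_val_fin_one,
      Matrix.of_apply, Fin.isValue, smul_eq_mul, if_true, if_false, one_ne_zero, zero_ne_one,
      reduceIte, Fin.zero_eta, Fin.mk_one]
  · linear_combination ((-1/331776)*h^12 - (11795/7247757312)*h^12*s53^2 - (1387/2415919104)*h^12*s53^4 - (65/805306368)*h^12*s53^6 - (1/268435456)*h^12*s53^8) * hs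
  · ring
  · ring
  · linear_combination ((-1/331776)*h^12 - (11795/7247757312)*h^12*s53^2 - (1387/2415919104)*h^12*s53^4 - (65/805306368)*h^12*s53^6 - (1/268435456)*h^12*s53^8) * hs

/-- the real projection of the fourth-order symmetric-conjugate
composition `S_{ᾱ₁h} ∘ S_{α₂h} ∘ S_{α₁h}` is pseudo-symmetric of order 11 for
the harmonic oscillator. -/
theorem projected_three_stage_composition_pseudo_symmetric_order_eleven :
    (fun h : ℝ => Rproj (-h) * Rproj h - 1) =O[nhds 0] fun h : ℝ => h ^ 12 := by
  apply IsBigO.of_bound ‖(!![(-5/995328 : ℝ), 0; 0, (-5/995328 : ℝ)] : Matrix (Fin 2) (Fin 2) ℝ)‖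
  filter_upwards with h
  rw [key h, norm_smul, mul_comm]
end

section
/- Let L(z) = M_T(z/2)·M_V(z)·M_T(z/2) be the leapfrog matrix for the harmonic oscillator, let α₁ = 1/4 + (i/4)·√(5/3), α₂ = 1/2, and let R(h) be the entrywise real part of L(conj(α₁) h)·L(α₂ h)·L(α₁ h). Then (fun h : ℝ => det R(h) − 1) is O(h¹²) as h → 0; that is, the real projection of this fourth-order symmetric-conjugate composition is pseudo-symplectic of order 11 for the harmonic oscillator. -/
open Matrix Asymptotics Filter

attribute [local instance] Matrix.normedAddCommGroup Matrix.normedSpace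

lemma L_entries (z : ℂ) : L z = !![1 - z ^ 2 / 2, z - z ^ 3 / 4; -z, 1 - z ^ 2 / 2] := by
  ext i j
  fin_cases i <;> fin_cases j <;>
    simp [L, MT, MV, Matrix.mul_apply, Fin.sum_univ_two] <;> ring

lemma conj_alpha : (starRingEnd ℂ) α₁ = 1 / 4 - Complex.I / 4 * (Real.sqrt (5 / 3) : ℝ) := by
  unfold α₁
  simp only [map_add, map_div₀, _root_.map_one, _root_.map_mul, _root_.map_ofNat,
    Complex.conj_I, Complex.conj_ofReal]
  ring

lemma psi_entries (h : ℝ) : Ψ₃ h =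
    !![((1 + (-1/2) * h ^ 2 + (1/24) * h ^ 4 + (-1/576) * h ^ 6 : ℝ) : ℂ) + (((1/576) * h ^ 6 * Real.sqrt (5/3) : ℝ) : ℂ) * Complex.I, ((1 * h + (-1/6) * h ^ 3 + (1/288) * h ^ 5 + (-1/1728) * h ^ 7 : ℝ) : ℂ);
       (((-1) * h + (1/6) * h ^ 3 + (-1/72) * h ^ 5 : ℝ) : ℂ), ((1 + (-1/2) * h ^ 2 + (1/24) * h ^ 4 + (-1/576) * h ^ 6 : ℝ) : ℂ) + (((-1/576) * h ^ 6 * Real.sqrt (5/3) : ℝ) : ℂ) * Complex.I] := by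
  have hs2 : ((Real.sqrt (5/3) : ℝ) : ℂ) ^ 2 = 5/3 := by
    rw [← Complex.ofReal_pow, Real.sq_sqrt (by norm_num : (0:ℝ) ≤ 5/3)]
    norm_num
  unfold Ψ₃
  rw [conj_alpha, L_entries, L_entries, L_entries]
  unfold α₁ α₂
  generalize Real.sqrt (5/3) = s at hs2 ⊢
  ext i j
  fin_cases i <;> fin_cases j
  · simp [Matrix.mul_apply, Fin.sum_univ_two]
    linear_combination ((-1/256) * (h:ℂ) ^ 4 * (s:ℂ) ^ 2 + (5/8192) * (h:ℂ) ^ 6 * (s:ℂ) ^ 2 + (-5/8192) * (h:ℂ) ^ 6 * (s:ℂ) ^ 3 * Complex.I + (1/16384) * (h:ℂ) ^ 6 * (s:ℂ) ^ 4 + (-1/16384) * (h:ℂ) ^ 6 * (s:ℂ) ^ 4 * Complex.I ^ 2 + (-1/16384) * (h:ℂ) ^ 6 * (s:ℂ) ^ 5 * Complex.I + (1/16384) * (h:ℂ) ^ 6 * (s:ℂ) ^ 5 * Complex.I ^ 3) * Complex.I_sq + ((1/256) * (h:ℂ) ^ 4 + (-35/49152) * (h:ℂ) ^ 6 + (35/49152)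 * (h:ℂ) ^ 6 * (s:ℂ) * Complex.I + (-1/16384) * (h:ℂ) ^ 6 * (s:ℂ) ^ 2 + (1/16384) * (h:ℂ) ^ 6 * (s:ℂ) ^ 3 * Complex.I) * hs2
  · simp [Matrix.mul_apply, Fin.sum_univ_two]
    linear_combination ((-1/128) * (h:ℂ) ^ 3 * (s:ℂ) ^ 2 + (3/2048) * (h:ℂ) ^ 5 * (s:ℂ) ^ 2 + (1/4096) * (h:ℂ) ^ 5 * (s:ℂ) ^ 4 + (-1/4096) * (h:ℂ) ^ 5 * (s:ℂ) ^ 4 * Complex.I ^ 2 + (19/131072) * (h:ℂ) ^ 7 * (s:ℂ) ^ 2 + (11/131072) * (h:ℂ) ^ 7 * (s:ℂ) ^ 4 + (-11/131072) * (h:ℂ) ^ 7 * (s:ℂ) ^ 4 * Complex.I ^ 2 + (1/131072) * (h:ℂ) ^ 7 * (s:ℂ) ^ 6 + (-1/131072) * (h:ℂ) ^ 7 * (s:ℂ) ^ 6 * Complex.I ^ 2 + (1/131072) * (h:ℂ) ^ 7 * (s:ℂ) ^ 6 * Complex.I ^ 4) * Complex.I_sq + ((1/128) * (h:ℂ) ^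 3 + (-23/12288) * (h:ℂ) ^ 5 + (-1/4096) * (h:ℂ) ^ 5 * (s:ℂ) ^ 2 + (-361/1179648) * (h:ℂ) ^ 7 + (-19/196608) * (h:ℂ) ^ 7 * (s:ℂ) ^ 2 + (-1/131072) * (h:ℂ) ^ 7 * (s:ℂ) ^ 4) * hs2
  · simp [Matrix.mul_apply, Fin.sum_univ_two]
    linear_combination ((-1/64) * (h:ℂ) ^ 3 * (s:ℂ) ^ 2 + (5/1024) * (h:ℂ) ^ 5 * (s:ℂ) ^ 2 + (1/2048) * (h:ℂ) ^ 5 * (s:ℂ) ^ 4 + (-1/2048) * (h:ℂ) ^ 5 * (s:ℂ) ^ 4 * Complex.I ^ 2) * Complex.I_sq + ((1/64) * (h:ℂ) ^ 3 + (-35/6144) * (h:ℂ) ^ 5 + (-1/2048) * (h:ℂ) ^ 5 * (s:ℂ) ^ 2) * hs2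
  · simp [Matrix.mul_apply, Fin.sum_univ_two]
    linear_combination ((-1/256) * (h:ℂ) ^ 4 * (s:ℂ) ^ 2 + (5/8192) * (h:ℂ) ^ 6 * (s:ℂ) ^ 2 + (5/8192) * (h:ℂ) ^ 6 * (s:ℂ) ^ 3 * Complex.I + (1/16384) * (h:ℂ) ^ 6 * (s:ℂ) ^ 4 + (-1/16384) * (h:ℂ) ^ 6 * (s:ℂ) ^ 4 * Complex.I ^ 2 + (1/16384) * (h:ℂ) ^ 6 * (s:ℂ) ^ 5 * Complex.I + (-1/16384) * (h:ℂ) ^ 6 * (s:ℂ) ^ 5 * Complex.I ^ 3) * Complex.I_sq + ((1/256) * (h:ℂ) ^ 4 + (-35/49152) * (h:ℂ) ^ 6 + (-35/49152) * (h:ℂ) ^ 6 * (s:ℂ) * Complex.I + (-1/16384) * (h:ℂ) ^ 6 * (s:ℂ) ^ 2 + (-1/16384) * (h:ℂ) ^ 6 * (s:ℂ) ^ 3 * Complex.I) * hs2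

lemma det_key (h : ℝ) : (Rproj h).det - 1 = (-5/995328) * h ^ 12 := by
  have hmap : Rproj h = (Ψ₃ h).map Complex.re := rfl
  rw [hmap, psi_entries, Matrix.det_fin_two]
  generalize Real.sqrt (5/3) = s
  simp [Matrix.map_apply, Complex.add_re, Complex.mul_re, ← Complex.ofReal_pow,
    Complex.ofReal_re, Complex.ofReal_im, Complex.I_re, Complex.I_im]
  ring

/-- the real projection of the fourth-order symmetric-conjugate
composition `S_{ᾱ₁h} ∘ S_{α₂h} ∘ S_{α₁h}` is pseudo-symplectic of order 11 for
the harmonic oscillator. -/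
theorem projected_three_stage_composition_pseudo_symplectic_order_eleven :
    (fun h : ℝ => (Rproj h).det - 1) =O[nhds 0] fun h : ℝ => h ^ 12 := by
  have hfun : (fun h : ℝ => (Rproj h).det - 1) = fun h : ℝ => (-5/995328) * h ^ 12 :=
    funext det_key
  rw [hfun]
  exact (isBigO_refl (fun h : ℝ => h ^ 12) _).const_mul_left _
end
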